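/- Let G = (V, E) be a finite simple graph whose vertex set is fair (equally many red and blue vertices). Let S* ⊆ V be a nonempty subset of maximum density among all subsets of V, and assume without loss of generality that |S* ∩ Blue| ≥ |S* ∩ Red|. Then there exists a set R' ⊆ Red \ S* with |R'| = |S* ∩ Blue| − |S* ∩ Red|; moreover, for every such R', the set T = S* ∪ R' is fair, satisfies |T| ≤ 2|S*|, and satisfies 2·D_T(G) ≥ D_S(G) for every fair subset S ⊆ V. -/

import Mathlib

open scoped Classical in
/-- Density of a vertex subset `S` in a simple graph `G`:
`2·e(S)/|S|` (the empty set has density 0). -/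
noncomputable def density {W : Type*} (G : SimpleGraph W) (S : Finset W) : ℝ :=
  (∑ i ∈ S, ∑ j ∈ S, if G.Adj i j then (1:ℝ) else 0) / S.card

/-- `G` is a fair graph (`|Red| = |Blue|`, where `Blue = Redᶜ`).
`Sstar` is a nonempty subset of maximum density, with `|Sstar ∩ Blue| ≥ |Sstar ∩ Red|`
(here `Sstar ∩ Blue = Sstar \ Red`).  Then some `R' ⊆ Red \ Sstar` has cardinality
`|Sstar ∩ Blue| − |Sstar ∩ Red|`; and for every such `R'`, the set `T = Sstar ∪ R'`
is fair, has `|T| ≤ 2|Sstar|`, and `2·D_T ≥ D_S` for every fair `S ⊆ V`. -/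
theorem fair_two_approx
    {V : Type*} [Fintype V] [DecidableEq V] (G : SimpleGraph V)
    (Red : Finset V) (hfairG : Red.card = Redᶜ.card)
    (Sstar : Finset V) (hne : Sstar.Nonempty)
    (hopt : ∀ R : Finset V, density G R ≤ density G Sstar)
    (hwlog : (Sstar ∩ Red).card ≤ (Sstar \ Red).card) :
    (∃ R' ⊆ Red \ Sstar, R'.card = (Sstar \ Red).card - (Sstar ∩ Red).card) ∧
    ∀ R' ⊆ Red \ Sstar, R'.card = (Sstar \ Red).card - (Sstar ∩ Red).card →
      ((Sstar ∪ R') ∩ Red).card = ((Sstar ∪ R') \ Red).card ∧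
      (Sstar ∪ R').card ≤ 2 * Sstar.card ∧
      ∀ S : Finset V, (S ∩ Red).card = (S \ Red).card →
        density G S ≤ 2 * density G (Sstar ∪ R') := by
  classical
  have hsub : Sstar \ Red ⊆ Redᶜ := by
    intro x hx
    simp only [Finset.mem_sdiff] at hx
    simpa [Finset.mem_compl] using hx.2
  have h1 : (Sstar \ Red).card ≤ Redᶜ.card := Finset.card_le_card hsub
  have h2 : (Red \ Sstar).card + (Red ∩ Sstar).card = Red.card :=
    Finset.card_sdiff_add_card_inter Red Sstar
  have h3 : (Red ∩ Sstar).card = (Sstar ∩ Red).card := by rw [Finset.inter_comm]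
  have hcard : (Sstar \ Red).card - (Sstar ∩ Red).card ≤ (Red \ Sstar).card := by omega
  obtain ⟨R0, hR0sub, hR0card⟩ := Finset.exists_subset_card_eq hcard
  refine ⟨⟨R0, hR0sub, hR0card⟩, ?_⟩
  intro R' hR'sub hR'card
  have hdisj : Disjoint Sstar R' := by
    refine Finset.disjoint_left.mpr fun x hx hx' => ?_
    have := hR'sub hx'
    simp only [Finset.mem_sdiff] at this
    exact this.2 hx
  have hR'Red : R' ⊆ Red := fun x hx => (Finset.mem_sdiff.mp (hR'sub hx)).1
  have hTcard : (Sstar ∪ R').card = Sstar.card + R'.card :=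
    Finset.card_union_of_disjoint hdisj
  -- fairness
  have hfair1 : (Sstar ∪ R') ∩ Red = (Sstar ∩ Red) ∪ R' := by
    rw [Finset.union_inter_distrib_right, Finset.inter_eq_left.mpr hR'Red]
  have hfair2 : (Sstar ∪ R') \ Red = Sstar \ Red := by
    rw [Finset.union_sdiff_distrib, Finset.sdiff_eq_empty_iff_subset.mpr hR'Red,
      Finset.union_empty]
  have hdisj2 : Disjoint (Sstar ∩ Red) R' :=
    hdisj.mono_left (Finset.inter_subset_left)
  have hfaircard : ((Sstar ∪ R') ∩ Red).card = ((Sstar ∪ R') \ Red).card := by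
    rw [hfair1, hfair2, Finset.card_union_of_disjoint hdisj2, hR'card]
    omega
  -- size bound
  have hsdle : (Sstar \ Red).card ≤ Sstar.card :=
    Finset.card_le_card (Finset.sdiff_subset)
  have hsize : (Sstar ∪ R').card ≤ 2 * Sstar.card := by
    rw [hTcard, hR'card]; omega
  refine ⟨hfaircard, hsize, ?_⟩
  intro S _
  refine le_trans (hopt S) ?_
  -- density Sstar ≤ 2 * density T
  set f : V → V → ℝ := fun i j => if G.Adj i j then (1:ℝ) else 0 with hf
  have hfnn : ∀ i j, 0 ≤ f i j := by intro i j; simp only [hf]; positivity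
  have hmono : (∑ i ∈ Sstar, ∑ j ∈ Sstar, f i j) ≤
      ∑ i ∈ Sstar ∪ R', ∑ j ∈ Sstar ∪ R', f i j := by
    calc (∑ i ∈ Sstar, ∑ j ∈ Sstar, f i j)
        ≤ ∑ i ∈ Sstar, ∑ j ∈ Sstar ∪ R', f i j :=
          Finset.sum_le_sum fun i _ =>
            Finset.sum_le_sum_of_subset_of_nonneg Finset.subset_union_left
              (fun j _ _ => hfnn i j)
      _ ≤ ∑ i ∈ Sstar ∪ R', ∑ j ∈ Sstar ∪ R', f i j :=
          Finset.sum_le_sum_of_subset_of_nonneg Finset.subset_union_left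
            (fun i _ _ => Finset.sum_nonneg fun j _ => hfnn i j)
  have heSnn : 0 ≤ ∑ i ∈ Sstar, ∑ j ∈ Sstar, f i j :=
    Finset.sum_nonneg fun i _ => Finset.sum_nonneg fun j _ => hfnn i j
  have hs0 : 0 < (Sstar.card : ℝ) := by
    exact_mod_cast Finset.card_pos.mpr hne
  have ht0 : 0 < ((Sstar ∪ R').card : ℝ) := by
    exact_mod_cast Finset.card_pos.mpr (hne.mono Finset.subset_union_left)
  have htle : ((Sstar ∪ R').card : ℝ) ≤ 2 * Sstar.card := by exact_mod_cast hsize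
  rw [density, density]
  show (∑ i ∈ Sstar, ∑ j ∈ Sstar, f i j) / (Sstar.card : ℝ) ≤
    2 * ((∑ i ∈ Sstar ∪ R', ∑ j ∈ Sstar ∪ R', f i j) / ((Sstar ∪ R').card : ℝ))
  rw [div_le_iff₀ hs0]
  have key : (∑ i ∈ Sstar, ∑ j ∈ Sstar, f i j) ≤
      2 * ((∑ i ∈ Sstar ∪ R', ∑ j ∈ Sstar ∪ R', f i j) / (Sstar ∪ R').card) * Sstar.card := by
    have hTnn : 0 ≤ ∑ i ∈ Sstar ∪ R', ∑ j ∈ Sstar ∪ R', f i j := le_trans heSnn hmono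
    have hrw : 2 * ((∑ i ∈ Sstar ∪ R', ∑ j ∈ Sstar ∪ R', f i j) / ((Sstar ∪ R').card : ℝ)) * Sstar.card
        = (2 * (∑ i ∈ Sstar ∪ R', ∑ j ∈ Sstar ∪ R', f i j) * Sstar.card) / (Sstar ∪ R').card := by
      ring
    rw [hrw, le_div_iff₀ ht0]
    calc (∑ i ∈ Sstar, ∑ j ∈ Sstar, f i j) * ((Sstar ∪ R').card : ℝ)
        ≤ (∑ i ∈ Sstar ∪ R', ∑ j ∈ Sstar ∪ R', f i j) * (2 * Sstar.card) :=
          mul_le_mul hmono htle (le_of_lt ht0) hTnn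
      _ = 2 * (∑ i ∈ Sstar ∪ R', ∑ j ∈ Sstar ∪ R', f i j) * Sstar.card := by ring
  exact key
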